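/- If (Σ, σ, γ) and (Σ', σ', γ') are factorisations of a comonad distributive law χ : T ⟶ C, then the triple (ΣΣ', Σσ' ∘ σΣ', γΣ' ∘ Σγ') is again a factorisation of χ; that is, the composed natural transformations Σσ' ∘ σΣ' : TΣΣ' ⟶ ΣΣ'T and γΣ' ∘ Σγ' : ΣΣ'C ⟶ CΣΣ' are distributive laws satisfying the Yang–Baxter condition with χ. -/
import Mathlib


open CategoryTheory

universe v u

namespace BohmStefan

variable {A : Type u} [Category.{v} A]

/-- A distributive law `σ : TΣ ⟶ ΣT` between a comonad `Tm` and an endofunctor `S`,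
with components `σ_X : T(S X) ⟶ S(T X)`. -/
def IsComonadEndoLaw (Tm : Comonad A) (S : A ⥤ A)
    (σ : S ⋙ (Tm : A ⥤ A) ⟶ (Tm : A ⥤ A) ⋙ S) : Prop :=
  (∀ X : A, σ.app X ≫ S.map (Tm.δ.app X) =
      Tm.δ.app (S.obj X) ≫ (Tm : A ⥤ A).map (σ.app X) ≫ σ.app (Tm.obj X)) ∧
  (∀ X : A, σ.app X ≫ S.map (Tm.ε.app X) = Tm.ε.app (S.obj X))

/-- A distributive law `γ : ΣC ⟶ CΣ` between an endofunctor `S` and a comonad `Cm`,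
with components `γ_X : S(C X) ⟶ C(S X)`. -/
def IsEndoComonadLaw (S : A ⥤ A) (Cm : Comonad A)
    (γ : (Cm : A ⥤ A) ⋙ S ⟶ S ⋙ (Cm : A ⥤ A)) : Prop :=
  (∀ X : A, γ.app X ≫ Cm.δ.app (S.obj X) =
      S.map (Cm.δ.app X) ≫ γ.app (Cm.obj X) ≫ (Cm : A ⥤ A).map (γ.app X)) ∧
  (∀ X : A, γ.app X ≫ Cm.ε.app (S.obj X) = S.map (Cm.ε.app X))

/-- A comonad distributive law `χ : Tm ⟶ Cm`. -/
def IsComonadDistLaw (Tm Cm : Comonad A)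
    (χ : (Cm : A ⥤ A) ⋙ (Tm : A ⥤ A) ⟶ (Tm : A ⥤ A) ⋙ (Cm : A ⥤ A)) : Prop :=
  IsComonadEndoLaw Tm (Cm : A ⥤ A) χ ∧ IsEndoComonadLaw (Tm : A ⥤ A) Cm χ

/-- The Yang-Baxter condition for `(S, σ, γ)` with respect to `χ`. -/
def IsYangBaxter (Tm Cm : Comonad A)
    (χ : (Cm : A ⥤ A) ⋙ (Tm : A ⥤ A) ⟶ (Tm : A ⥤ A) ⋙ (Cm : A ⥤ A)) (S : A ⥤ A)
    (σ : S ⋙ (Tm : A ⥤ A) ⟶ (Tm : A ⥤ A) ⋙ S)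
    (γ : (Cm : A ⥤ A) ⋙ S ⟶ S ⋙ (Cm : A ⥤ A)) : Prop :=
  ∀ X : A, σ.app (Cm.obj X) ≫ S.map (χ.app X) ≫ γ.app (Tm.obj X) =
    (Tm : A ⥤ A).map (γ.app X) ≫ χ.app (S.obj X) ≫ (Cm : A ⥤ A).map (σ.app X)

/-- `(S, σ, γ)` is a factorisation of the distributive law `χ : Tm ⟶ Cm`. -/
def IsFactorisation (Tm Cm : Comonad A)
    (χ : (Cm : A ⥤ A) ⋙ (Tm : A ⥤ A) ⟶ (Tm : A ⥤ A) ⋙ (Cm : A ⥤ A)) (S : A ⥤ A)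
    (σ : S ⋙ (Tm : A ⥤ A) ⟶ (Tm : A ⥤ A) ⋙ S)
    (γ : (Cm : A ⥤ A) ⋙ S ⟶ S ⋙ (Cm : A ⥤ A)) : Prop :=
  IsComonadEndoLaw Tm S σ ∧ IsEndoComonadLaw S Cm γ ∧ IsYangBaxter Tm Cm χ S σ γ


/-- the tensor product of two factorisations of a comonad distributive law
`χ : Tm ⟶ Cm` is again a factorisation. -/
theorem tensor_isFactorisation (Tm Cm : Comonad A)
    (χ : (Cm : A ⥤ A) ⋙ (Tm : A ⥤ A) ⟶ (Tm : A ⥤ A) ⋙ (Cm : A ⥤ A))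
    (hχ : IsComonadDistLaw Tm Cm χ)
    (S S' : A ⥤ A)
    (σ : S ⋙ (Tm : A ⥤ A) ⟶ (Tm : A ⥤ A) ⋙ S)
    (γ : (Cm : A ⥤ A) ⋙ S ⟶ S ⋙ (Cm : A ⥤ A))
    (σ' : S' ⋙ (Tm : A ⥤ A) ⟶ (Tm : A ⥤ A) ⋙ S')
    (γ' : (Cm : A ⥤ A) ⋙ S' ⟶ S' ⋙ (Cm : A ⥤ A))
    (h : IsFactorisation Tm Cm χ S σ γ)
    (h' : IsFactorisation Tm Cm χ S' σ' γ')
    (σ₂ : (S' ⋙ S) ⋙ (Tm : A ⥤ A) ⟶ (Tm : A ⥤ A) ⋙ (S' ⋙ S))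
    (hσ₂ : ∀ X : A, σ₂.app X = σ.app (S'.obj X) ≫ S.map (σ'.app X))
    (γ₂ : (Cm : A ⥤ A) ⋙ (S' ⋙ S) ⟶ (S' ⋙ S) ⋙ (Cm : A ⥤ A))
    (hγ₂ : ∀ X : A, γ₂.app X = S.map (γ'.app X) ≫ γ.app (S'.obj X)) :
    IsFactorisation Tm Cm χ (S' ⋙ S) σ₂ γ₂ := by
  obtain ⟨⟨hσδ, hσε⟩, ⟨hγδ, hγε⟩, hyb⟩ := h
  obtain ⟨⟨hσδ', hσε'⟩, ⟨hγδ', hγε'⟩, hyb'⟩ := h'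
  have natσ : ∀ {X Y : A} (f : X ⟶ Y), σ.app X ≫ S.map ((Tm : A ⥤ A).map f)
      = (Tm : A ⥤ A).map (S.map f) ≫ σ.app Y := fun f => (σ.naturality f).symm
  have natγ : ∀ {X Y : A} (f : X ⟶ Y), S.map ((Cm : A ⥤ A).map f) ≫ γ.app Y
      = γ.app X ≫ (Cm : A ⥤ A).map (S.map f) := fun f => γ.naturality f
  refine ⟨⟨fun X => ?_, fun X => ?_⟩, ⟨fun X => ?_, fun X => ?_⟩, fun X => ?_⟩
  · calc σ₂.app X ≫ (S' ⋙ S).map (Tm.δ.app X)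
        = σ.app (S'.obj X) ≫ S.map (σ'.app X ≫ S'.map (Tm.δ.app X)) := by
          simp [hσ₂]
      _ = (σ.app (S'.obj X) ≫ S.map (Tm.δ.app (S'.obj X))) ≫
            S.map ((Tm : A ⥤ A).map (σ'.app X)) ≫ S.map (σ'.app (Tm.obj X)) := by
          rw [hσδ']; simp
      _ = Tm.δ.app (S.obj (S'.obj X)) ≫ (Tm : A ⥤ A).map (σ.app (S'.obj X)) ≫
            (σ.app (Tm.obj (S'.obj X)) ≫ S.map ((Tm : A ⥤ A).map (σ'.app X))) ≫
            S.map (σ'.app (Tm.obj X)) := by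
          rw [hσδ]; simp
      _ = Tm.δ.app ((S' ⋙ S).obj X) ≫ (Tm : A ⥤ A).map (σ₂.app X) ≫ σ₂.app (Tm.obj X) := by
          rw [natσ]; simp [hσ₂]
  · calc σ₂.app X ≫ (S' ⋙ S).map (Tm.ε.app X)
        = σ.app (S'.obj X) ≫ S.map (σ'.app X ≫ S'.map (Tm.ε.app X)) := by simp [hσ₂]
      _ = Tm.ε.app ((S' ⋙ S).obj X) := by rw [hσε']; exact hσε _
  · calc γ₂.app X ≫ Cm.δ.app ((S' ⋙ S).obj X)
        = S.map (γ'.app X) ≫ γ.app (S'.obj X) ≫ Cm.δ.app (S.obj (S'.obj X)) := by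
          simp [hγ₂]
      _ = S.map (γ'.app X ≫ Cm.δ.app (S'.obj X)) ≫
            γ.app ((Cm : A ⥤ A).obj (S'.obj X)) ≫ (Cm : A ⥤ A).map (γ.app (S'.obj X)) := by
          rw [hγδ]; simp
      _ = S.map (S'.map (Cm.δ.app X)) ≫ S.map (γ'.app (Cm.obj X)) ≫
            (S.map ((Cm : A ⥤ A).map (γ'.app X)) ≫ γ.app ((Cm : A ⥤ A).obj (S'.obj X))) ≫
            (Cm : A ⥤ A).map (γ.app (S'.obj X)) := by
          rw [hγδ']; simp
      _ = (S' ⋙ S).map (Cm.δ.app X) ≫ γ₂.app (Cm.obj X) ≫ (Cm : A ⥤ A).map (γ₂.app X) := by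
          erw [natγ]; simp [hγ₂]
  · calc γ₂.app X ≫ Cm.ε.app ((S' ⋙ S).obj X)
        = S.map (γ'.app X ≫ Cm.ε.app (S'.obj X)) := by
          rw [hγ₂]; simp [hγε]
      _ = (S' ⋙ S).map (Cm.ε.app X) := by rw [hγε']; simp
  · calc σ₂.app (Cm.obj X) ≫ (S' ⋙ S).map (χ.app X) ≫ γ₂.app (Tm.obj X)
        = σ.app (S'.obj (Cm.obj X)) ≫
            S.map (σ'.app (Cm.obj X) ≫ S'.map (χ.app X) ≫ γ'.app (Tm.obj X)) ≫
            γ.app (S'.obj (Tm.obj X)) := by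
          simp [hσ₂, hγ₂]
      _ = (σ.app (S'.obj (Cm.obj X)) ≫ S.map ((Tm : A ⥤ A).map (γ'.app X))) ≫
            S.map (χ.app (S'.obj X)) ≫
            (S.map ((Cm : A ⥤ A).map (σ'.app X)) ≫ γ.app (S'.obj (Tm.obj X))) := by
          rw [hyb']; simp
      _ = (Tm : A ⥤ A).map (S.map (γ'.app X)) ≫
            (σ.app ((Cm : A ⥤ A).obj (S'.obj X)) ≫ S.map (χ.app (S'.obj X)) ≫
              γ.app (Tm.obj (S'.obj X))) ≫
            (Cm : A ⥤ A).map (S.map (σ'.app X)) := by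
          erw [natσ, natγ]; simp
      _ = (Tm : A ⥤ A).map (γ₂.app X) ≫ χ.app ((S' ⋙ S).obj X) ≫
            (Cm : A ⥤ A).map (σ₂.app X) := by
          rw [hyb]; simp [hσ₂, hγ₂]

end BohmStefan
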